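/- A connected finite simple graph G with spectral radius ρ > 0 is harmonic and non-regular if and only if the only main eigenvalues of G are ρ and 0. -/

import Mathlib

open Matrix

def SimpleGraph.IsMainEigenvalue {V : Type*} [Fintype V] [DecidableEq V]
    (G : SimpleGraph V) [DecidableRel G.Adj] (μ : ℝ) : Prop :=
  ∃ x : V → ℝ, x ≠ 0 ∧ (G.adjMatrix ℝ).mulVec x = μ • x ∧ x ⬝ᵥ (fun _ => (1 : ℝ)) ≠ 0

namespace Stmt3Aux

open Matrix Finset

set_option linter.unusedSectionVars false

lemma dot_sum_sum {V : Type*} [Fintype V] [DecidableEq V] (e : V → V → ℝ) (f g : V → ℝ)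
    (h : ∀ i j, e i ⬝ᵥ e j = if i = j then 1 else 0) :
    (∑ i, f i • e i) ⬝ᵥ (∑ j, g j • e j) = ∑ i, f i * g i := by
  have expand : ∀ (u w : V → ℝ), u ⬝ᵥ w = ∑ x, u x * w x := fun _ _ => rfl
  rw [expand]
  simp only [Finset.sum_apply, Pi.smul_apply, smul_eq_mul, Finset.sum_mul_sum]
  rw [Finset.sum_comm]
  refine Finset.sum_congr rfl fun i _ => ?_
  rw [Finset.sum_comm]
  have : ∀ j : V, ∑ x : V, f i * (e i x) * (g j * e j x) = f i * g j * (e i ⬝ᵥ e j) := by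
    intro j; rw [expand, Finset.mul_sum]; exact Finset.sum_congr rfl fun x _ => by ring
  simp only [this, h, mul_ite, mul_one, mul_zero, Finset.sum_ite_eq', Finset.sum_ite_eq, Finset.mem_univ, if_true]

variable {V : Type*} [Fintype V] [DecidableEq V] (G : SimpleGraph V) [DecidableRel G.Adj]

noncomputable def evec (hA : (G.adjMatrix ℝ).IsHermitian) (i : V) : V → ℝ :=
  ⇑(hA.eigenvectorBasis i)

variable {G}
variable (hA : (G.adjMatrix ℝ).IsHermitian)

lemma evec_dot (i j : V) : evec G hA i ⬝ᵥ evec G hA j = if i = j then 1 else 0 := by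
  have := hA.eigenvectorBasis.orthonormal
  rw [orthonormal_iff_ite] at this
  rw [← this i j]
  simp [PiLp.inner_apply, dotProduct, RCLike.inner_apply, evec]
  exact Finset.sum_congr rfl fun _ _ => mul_comm _ _

lemma evec_eig (i : V) : (G.adjMatrix ℝ) *ᵥ evec G hA i = hA.eigenvalues i • evec G hA i :=
  hA.mulVec_eigenvectorBasis i

lemma evec_repr (w : V → ℝ) : ∑ i, (evec G hA i ⬝ᵥ w) • evec G hA i = w := by
  have h := congrArg WithLp.ofLp (hA.eigenvectorBasis.sum_repr' (WithLp.toLp 2 w))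
  have e : ∀ i : V, (inner ℝ (hA.eigenvectorBasis i) (WithLp.toLp 2 w) : ℝ)
      = evec G hA i ⬝ᵥ w := by
    intro i; simp [PiLp.inner_apply, dotProduct, RCLike.inner_apply, evec]
    exact Finset.sum_congr rfl fun _ _ => mul_comm _ _
  simp only [e] at h
  simpa [WithLp.ofLp_sum, WithLp.ofLp_smul, evec] using h

lemma evec_ne_zero (i : V) : evec G hA i ≠ 0 := by
  intro h
  have := evec_dot hA i i
  rw [h] at this
  simp at this

lemma mulVec_sum_smul (f : V → ℝ) :
    (G.adjMatrix ℝ) *ᵥ (∑ i, f i • evec G hA i) = ∑ i, (hA.eigenvalues i * f i) • evec G hA i := by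
  have : (G.adjMatrix ℝ) *ᵥ (∑ i, f i • evec G hA i)
      = (G.adjMatrix ℝ).mulVecLin (∑ i, f i • evec G hA i) := rfl
  rw [this, map_sum]
  refine Finset.sum_congr rfl fun i _ => ?_
  rw [LinearMap.map_smul, mulVecLin_apply, evec_eig hA i, smul_smul, mul_comm]


lemma dot_sum_sum2 (hA : (G.adjMatrix ℝ).IsHermitian) (f g : V → ℝ) :
    (∑ i, f i • evec G hA i) ⬝ᵥ (∑ j, g j • evec G hA j) = ∑ i, f i * g i :=
  dot_sum_sum _ f g (evec_dot hA)


lemma perron (hG : G.Connected) {ρ : ℝ} (hρpos : 0 < ρ)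
    (hρeig : ∃ x : V → ℝ, x ≠ 0 ∧ (G.adjMatrix ℝ).mulVec x = ρ • x)
    (hρmax : ∀ μ : ℝ, (∃ x : V → ℝ, x ≠ 0 ∧ (G.adjMatrix ℝ).mulVec x = μ • x) → μ ≤ ρ) :
    ∃ z : V → ℝ, (∀ v, 0 < z v) ∧ (G.adjMatrix ℝ) *ᵥ z = ρ • z := by
  classical
  obtain ⟨x, hx0, hxe⟩ := hρeig
  have hA : (G.adjMatrix ℝ).IsHermitian := by rw [Matrix.IsHermitian, conjTranspose_eq_transpose_of_trivial]; exact G.isSymm_adjMatrix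
  set lam := hA.eigenvalues with hlam
  set z : V → ℝ := fun v => |x v| with hzdef
  have hznn : ∀ v, 0 ≤ z v := fun v => abs_nonneg _
  have hAnn : ∀ v u, (0:ℝ) ≤ G.adjMatrix ℝ v u := by
    intro v u; rw [SimpleGraph.adjMatrix_apply]; split <;> norm_num
  -- pointwise inequality
  have hpt : ∀ v, ρ * z v ≤ ((G.adjMatrix ℝ) *ᵥ z) v := by
    intro v
    have h1 : ((G.adjMatrix ℝ) *ᵥ x) v = ρ * x v := by rw [hxe]; rfl
    have h2 : |((G.adjMatrix ℝ) *ᵥ x) v| = ρ * z v := by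
      rw [h1, abs_mul, abs_of_pos hρpos]
    rw [← h2]
    calc |((G.adjMatrix ℝ) *ᵥ x) v| = |∑ u, G.adjMatrix ℝ v u * x u| := rfl
      _ ≤ ∑ u, |G.adjMatrix ℝ v u * x u| := Finset.abs_sum_le_sum_abs _ _
      _ = ∑ u, G.adjMatrix ℝ v u * z u := by
          refine Finset.sum_congr rfl fun u _ => ?_
          rw [abs_mul, abs_of_nonneg (hAnn v u)]
      _ = ((G.adjMatrix ℝ) *ᵥ z) v := rfl
  set c : V → ℝ := fun i => evec G hA i ⬝ᵥ z with hcdef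
  have hrep : ∑ i, c i • evec G hA i = z := evec_repr hA z
  have hAz : (G.adjMatrix ℝ) *ᵥ z = ∑ i, (lam i * c i) • evec G hA i := by
    conv_lhs => rw [← hrep]
    exact mulVec_sum_smul hA c
  have hdot1 : z ⬝ᵥ ((G.adjMatrix ℝ) *ᵥ z) = ∑ i, c i * (lam i * c i) := by
    rw [hAz, ← hrep]
    exact dot_sum_sum2 hA _ _
  have hdot2 : z ⬝ᵥ z = ∑ i, c i * c i := by
    conv_lhs => rw [← hrep]
    exact dot_sum_sum2 hA _ _
  have hray : ρ * (z ⬝ᵥ z) ≤ z ⬝ᵥ ((G.adjMatrix ℝ) *ᵥ z) := by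
    have : ∀ v, ρ * (z v * z v) ≤ z v * ((G.adjMatrix ℝ) *ᵥ z) v := by
      intro v
      have := mul_le_mul_of_nonneg_left (hpt v) (hznn v)
      calc ρ * (z v * z v) = z v * (ρ * z v) := by ring
        _ ≤ z v * ((G.adjMatrix ℝ) *ᵥ z) v := this
    calc ρ * (z ⬝ᵥ z) = ∑ v, ρ * (z v * z v) := by
          rw [show z ⬝ᵥ z = ∑ v, z v * z v from rfl, Finset.mul_sum]
      _ ≤ ∑ v, z v * ((G.adjMatrix ℝ) *ᵥ z) v := Finset.sum_le_sum fun v _ => this v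
      _ = z ⬝ᵥ ((G.adjMatrix ℝ) *ᵥ z) := rfl
  have hlamle : ∀ i, lam i ≤ ρ := fun i =>
    hρmax _ ⟨evec G hA i, evec_ne_zero hA i, evec_eig hA i⟩
  have hkey : ∀ i, lam i * c i = ρ * c i := by
    have hsum : ∑ i, (ρ - lam i) * (c i * c i) = 0 := by
      have hle : ∑ i, (ρ - lam i) * (c i * c i) ≤ 0 := by
        have : ∑ i, (ρ - lam i) * (c i * c i)
            = ρ * (z ⬝ᵥ z) - z ⬝ᵥ ((G.adjMatrix ℝ) *ᵥ z) := by
          rw [hdot1, hdot2, Finset.mul_sum, ← Finset.sum_sub_distrib]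
          exact Finset.sum_congr rfl fun i _ => by ring
        rw [this]; linarith
      have hge : (0:ℝ) ≤ ∑ i, (ρ - lam i) * (c i * c i) :=
        Finset.sum_nonneg fun i _ =>
          mul_nonneg (by linarith [hlamle i]) (mul_self_nonneg _)
      linarith
    intro i
    have := (Finset.sum_eq_zero_iff_of_nonneg
      (fun i _ => mul_nonneg (by linarith [hlamle i]) (mul_self_nonneg (c i)))).mp hsum i
      (Finset.mem_univ i)
    rcases mul_eq_zero.mp this with h | h
    · have : lam i = ρ := by linarith
      rw [this]
    · have : c i = 0 := by
        rcases mul_self_eq_zero.mp h with h'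
        exact h'
      rw [this, mul_zero, mul_zero]
  have hAzρ : (G.adjMatrix ℝ) *ᵥ z = ρ • z := by
    rw [hAz, ← hrep, Finset.smul_sum]
    exact Finset.sum_congr rfl fun i _ => by rw [hkey i, smul_smul]
  -- positivity via connectivity
  have hclosed : ∀ v, z v = 0 → ∀ u, G.Adj v u → z u = 0 := by
    intro v hv u hadj
    have h1 : ((G.adjMatrix ℝ) *ᵥ z) v = 0 := by rw [hAzρ]; simp [hv]
    rw [SimpleGraph.adjMatrix_mulVec_apply] at h1
    have := (Finset.sum_eq_zero_iff_of_nonneg (fun u _ => hznn u)).mp h1 u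
      (by rwa [SimpleGraph.mem_neighborFinset])
    exact this
  obtain ⟨w, hw⟩ : ∃ w, z w ≠ 0 := by
    obtain ⟨v, hv⟩ := Function.ne_iff.mp hx0
    exact ⟨v, by simpa [hzdef] using hv⟩
  have hwalk : ∀ (a b : V) (p : G.Walk a b), z a = 0 → z b = 0 := by
    intro a b p
    induction p with
    | nil => exact id
    | cons h q ih => intro ha; exact ih (hclosed _ ha _ h)
  refine ⟨z, fun v => ?_, hAzρ⟩
  rcases (hznn v).lt_or_eq with h | h
  · exact h
  · exfalso
    exact hw ((hG.preconnected v w).elim fun p => hwalk v w p h.symm)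

lemma adj_dot_symm (x y : V → ℝ) :
    ((G.adjMatrix ℝ) *ᵥ x) ⬝ᵥ y = x ⬝ᵥ ((G.adjMatrix ℝ) *ᵥ y) := by
  rw [dotProduct_mulVec, ← mulVec_transpose, SimpleGraph.transpose_adjMatrix]


lemma hd_deg : (G.adjMatrix ℝ) *ᵥ (fun _ => (1:ℝ)) = fun v => (G.degree v : ℝ) := by
  funext v
  rw [SimpleGraph.adjMatrix_mulVec_apply, Finset.sum_const, nsmul_eq_mul, mul_one]
  rfl

lemma forward (hG : G.Connected) {ρ : ℝ} (hρpos : 0 < ρ)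
    (hρeig : ∃ x : V → ℝ, x ≠ 0 ∧ (G.adjMatrix ℝ).mulVec x = ρ • x)
    (hρmax : ∀ μ : ℝ, (∃ x : V → ℝ, x ≠ 0 ∧ (G.adjMatrix ℝ).mulVec x = μ • x) → μ ≤ ρ)
    (δ : ℕ) (hδpos : 0 < δ)
    (hhar : (G.adjMatrix ℝ).mulVec ((G.adjMatrix ℝ).mulVec (fun _ => (1 : ℝ))) =
          (δ : ℝ) • (G.adjMatrix ℝ).mulVec (fun _ => (1 : ℝ)))
    (hnreg : ¬ ∃ k : ℕ, G.IsRegularOfDegree k) :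
    {μ : ℝ | G.IsMainEigenvalue μ} = {ρ, 0} := by
  classical
  have hne : Nonempty V := hG.nonempty
  set d : V → ℝ := (G.adjMatrix ℝ) *ᵥ (fun _ => (1:ℝ)) with hddef
  obtain ⟨z, hzpos, hze⟩ := perron hG hρpos hρeig hρmax
  have hz0 : z ≠ 0 := by
    intro h
    obtain ⟨v⟩ := hne
    exact absurd (congrFun h v) (ne_of_gt (hzpos v))
  have hz1 : (0:ℝ) < z ⬝ᵥ (fun _ => (1:ℝ)) := by
    have : z ⬝ᵥ (fun _ => (1:ℝ)) = ∑ v, z v := by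
      simp [dotProduct]
    rw [this]
    exact Finset.sum_pos (fun v _ => hzpos v) Finset.univ_nonempty
  have hρmain : G.IsMainEigenvalue ρ := ⟨z, hz0, hze, ne_of_gt hz1⟩
  have hzd : z ⬝ᵥ d = ρ * (z ⬝ᵥ (fun _ => (1:ℝ))) := by
    rw [hddef, ← adj_dot_symm, hze, smul_dotProduct, smul_eq_mul]
  have hzAd : z ⬝ᵥ ((G.adjMatrix ℝ) *ᵥ d) = ρ * (z ⬝ᵥ d) := by
    rw [← adj_dot_symm, hze, smul_dotProduct, smul_eq_mul]
  have hzAd' : z ⬝ᵥ ((G.adjMatrix ℝ) *ᵥ d) = (δ:ℝ) * (z ⬝ᵥ d) := by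
    rw [hddef]; rw [show (G.adjMatrix ℝ) *ᵥ ((G.adjMatrix ℝ) *ᵥ (fun _ => (1:ℝ)))
      = (δ:ℝ) • ((G.adjMatrix ℝ) *ᵥ (fun _ => (1:ℝ))) from hhar, dotProduct_smul, smul_eq_mul]
  have hρδ : (δ:ℝ) = ρ := by
    have h1 : ρ * (ρ * (z ⬝ᵥ (fun _ => (1:ℝ)))) = (δ:ℝ) * (ρ * (z ⬝ᵥ (fun _ => (1:ℝ)))) := by
      rw [← hzd, ← hzAd, hzAd']
    have h2 : ρ * (z ⬝ᵥ (fun _ => (1:ℝ))) ≠ 0 := mul_ne_zero (ne_of_gt hρpos) (ne_of_gt hz1)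
    have h3 : (ρ - (δ:ℝ)) * (ρ * (z ⬝ᵥ (fun _ => (1:ℝ)))) = 0 := by
      rw [sub_mul, h1, sub_self]
    rcases mul_eq_zero.mp h3 with h | h
    · linarith
    · exact absurd h h2
  -- the zero eigenvector
  set y : V → ℝ := (fun _ => (1:ℝ)) - ρ⁻¹ • d with hydef
  have hAd : (G.adjMatrix ℝ) *ᵥ d = ρ • d := by
    rw [hddef]
    rw [show (G.adjMatrix ℝ) *ᵥ ((G.adjMatrix ℝ) *ᵥ (fun _ => (1:ℝ)))
      = (δ:ℝ) • ((G.adjMatrix ℝ) *ᵥ (fun _ => (1:ℝ))) from hhar, hρδ]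
  have hAy : (G.adjMatrix ℝ) *ᵥ y = 0 := by
    rw [hydef, mulVec_sub, mulVec_smul, hAd, smul_smul, inv_mul_cancel₀ (ne_of_gt hρpos),
      one_smul, hddef, sub_self]
  have hy0 : y ≠ 0 := by
    intro h
    apply hnreg
    refine ⟨δ, fun v => ?_⟩
    have hv := congrFun h v
    rw [hydef] at hv
    simp only [Pi.sub_apply, Pi.smul_apply, smul_eq_mul, Pi.zero_apply] at hv
    have hdv : d v = (G.degree v : ℝ) := congrFun hd_deg v
    rw [hdv] at hv
    have : (G.degree v : ℝ) = (δ:ℝ) := by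
      rw [hρδ]
      field_simp at hv
      linarith
    exact_mod_cast this
  have hyd : y ⬝ᵥ d = 0 := by
    have h1 : y ⬝ᵥ ((G.adjMatrix ℝ) *ᵥ d) = 0 := by
      rw [← adj_dot_symm, hAy, zero_dotProduct]
    rw [hAd, dotProduct_smul, smul_eq_mul] at h1
    exact (mul_eq_zero.mp h1).resolve_left (ne_of_gt hρpos)
  have hy1 : y ⬝ᵥ (fun _ => (1:ℝ)) ≠ 0 := by
    have hsplit : (fun _ => (1:ℝ)) = y + ρ⁻¹ • d := by rw [hydef, sub_add_cancel]
    rw [hsplit, dotProduct_add, dotProduct_smul, hyd, smul_zero, add_zero]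
    intro h
    exact hy0 ((dotProduct_self_eq_zero).mp h)
  have h0main : G.IsMainEigenvalue 0 := ⟨y, hy0, by rw [show (G.adjMatrix ℝ).mulVec y = 0 from hAy, zero_smul], hy1⟩
  ext μ
  simp only [Set.mem_setOf_eq, Set.mem_insert_iff, Set.mem_singleton_iff]
  constructor
  · rintro ⟨x, hx0, hxe, hx1⟩
    have e1 : x ⬝ᵥ d = μ * (x ⬝ᵥ (fun _ => (1:ℝ))) := by
      rw [hddef, ← adj_dot_symm, hxe, smul_dotProduct, smul_eq_mul]
    have e2 : x ⬝ᵥ ((G.adjMatrix ℝ) *ᵥ d) = μ * (x ⬝ᵥ d) := by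
      rw [← adj_dot_symm, hxe, smul_dotProduct, smul_eq_mul]
    have e3 : x ⬝ᵥ ((G.adjMatrix ℝ) *ᵥ d) = ρ * (x ⬝ᵥ d) := by
      rw [hAd, dotProduct_smul, smul_eq_mul]
    have : μ * (μ * (x ⬝ᵥ (fun _ => (1:ℝ)))) = ρ * (μ * (x ⬝ᵥ (fun _ => (1:ℝ)))) := by
      rw [← e1, ← e2, e3, e1]
    have hfac : (μ - ρ) * (μ * (x ⬝ᵥ (fun _ => (1:ℝ)))) = 0 := by linarith
    rcases mul_eq_zero.mp hfac with h | h
    · left; linarith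
    · rcases mul_eq_zero.mp h with h' | h'
      · right; exact h'
      · exact absurd h' hx1
  · rintro (rfl | rfl)
    · exact hρmain
    · exact h0main

lemma exists_degree_pos {ρ : ℝ} (hρpos : 0 < ρ)
    (hρeig : ∃ x : V → ℝ, x ≠ 0 ∧ (G.adjMatrix ℝ).mulVec x = ρ • x) :
    ∃ v₀ : V, 0 < G.degree v₀ := by
  by_contra h
  push_neg at h
  have hdeg : ∀ v, G.degree v = 0 := fun v => Nat.le_zero.mp (h v)
  obtain ⟨x, hx0, hxe⟩ := hρeig
  apply hx0
  have hAx : (G.adjMatrix ℝ) *ᵥ x = 0 := by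
    funext v
    rw [SimpleGraph.adjMatrix_mulVec_apply]
    have : G.neighborFinset v = ∅ := Finset.card_eq_zero.mp (hdeg v)
    simp [this]
  rw [hAx] at hxe
  have := hxe.symm
  rcases smul_eq_zero.mp this with h' | h'
  · exact absurd h' (ne_of_gt hρpos)
  · exact h'

lemma reverse (hG : G.Connected) {ρ : ℝ} (hρpos : 0 < ρ)
    (hρeig : ∃ x : V → ℝ, x ≠ 0 ∧ (G.adjMatrix ℝ).mulVec x = ρ • x)
    (hmain : {μ : ℝ | G.IsMainEigenvalue μ} = {ρ, 0}) :
    (∃ δ : ℕ, 0 < δ ∧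
        (G.adjMatrix ℝ).mulVec ((G.adjMatrix ℝ).mulVec (fun _ => (1 : ℝ))) =
          (δ : ℝ) • (G.adjMatrix ℝ).mulVec (fun _ => (1 : ℝ))) ∧
      ¬ ∃ k : ℕ, G.IsRegularOfDegree k := by
  classical
  have hA : (G.adjMatrix ℝ).IsHermitian := by
    rw [Matrix.IsHermitian, conjTranspose_eq_transpose_of_trivial]; exact G.isSymm_adjMatrix
  set lam := hA.eigenvalues with hlam
  -- harmonic over ℝ
  set c : V → ℝ := fun i => evec G hA i ⬝ᵥ (fun _ => (1:ℝ)) with hcdef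
  have hrep : ∑ i, c i • evec G hA i = (fun _ => (1:ℝ)) := evec_repr hA _
  have hkey : ∀ i, lam i * (lam i * c i) = ρ * (lam i * c i) := by
    intro i
    by_cases hc : c i = 0
    · rw [hc]; ring
    · have hmem : lam i ∈ {μ : ℝ | G.IsMainEigenvalue μ} :=
        ⟨evec G hA i, evec_ne_zero hA i, evec_eig hA i, hc⟩
      rw [hmain] at hmem
      rcases hmem with h | h
      · rw [h]
      · rw [Set.mem_singleton_iff] at h
        rw [h]; ring
  have hhar : (G.adjMatrix ℝ).mulVec ((G.adjMatrix ℝ).mulVec (fun _ => (1 : ℝ))) =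
      ρ • (G.adjMatrix ℝ).mulVec (fun _ => (1 : ℝ)) := by
    have h1 : (G.adjMatrix ℝ) *ᵥ (fun _ => (1:ℝ)) = ∑ i, (lam i * c i) • evec G hA i := by
      conv_lhs => rw [← hrep]
      exact mulVec_sum_smul hA c
    rw [h1, mulVec_sum_smul hA _, Finset.smul_sum]
    refine Finset.sum_congr rfl fun i _ => ?_
    rw [hkey i, smul_smul]
  -- integrality
  obtain ⟨v₀, hv₀⟩ := exists_degree_pos hρpos hρeig
  set N : V → ℕ := fun v => ∑ u ∈ G.neighborFinset v, G.degree u with hNdef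
  have hNv : ∀ v, ρ * (G.degree v : ℝ) = (N v : ℝ) := by
    intro v
    have h := congrFun hhar v
    rw [hd_deg (G := G)] at h
    have hl : ((G.adjMatrix ℝ) *ᵥ (fun v => (G.degree v : ℝ))) v = (N v : ℝ) := by
      rw [SimpleGraph.adjMatrix_mulVec_apply, hNdef]
      push_cast
      rfl
    rw [hl] at h
    have hr : (ρ • fun v => (G.degree v : ℝ)) v = ρ * (G.degree v : ℝ) := rfl
    rw [hr] at h
    exact h.symm
  set q : ℚ := (N v₀ : ℚ) / (G.degree v₀ : ℚ) with hqdef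
  have hdeg0 : ((G.degree v₀ : ℝ)) ≠ 0 := by positivity
  have hqρ : (q : ℝ) = ρ := by
    rw [hqdef]
    push_cast
    rw [← hNv v₀]
    field_simp
  have hZ : ∀ v, q.num * (G.degree v : ℤ) = (q.den : ℤ) * (N v : ℤ) := by
    intro v
    have hreal : (q.num : ℝ) * (G.degree v : ℝ) = (q.den : ℝ) * (N v : ℝ) := by
      have hcast : (q : ℝ) = (q.num : ℝ) / (q.den : ℝ) := by
        rw [Rat.cast_def]
      have hden : ((q.den : ℝ)) ≠ 0 := by positivity
      have h := hNv v
      rw [← hqρ, hcast] at h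
      field_simp at h
      linarith
    exact_mod_cast hreal
  have hdvd : ∀ k : ℕ, ∀ v, ((q.den : ℤ))^k ∣ (G.degree v : ℤ) := by
    intro k
    induction k with
    | zero => intro v; simp
    | succ k ih =>
      intro v
      have h1 : ((q.den:ℤ))^k ∣ (N v : ℤ) := by
        have : (N v : ℤ) = ∑ u ∈ G.neighborFinset v, (G.degree u : ℤ) := by
          rw [hNdef]; push_cast; rfl
        rw [this]
        exact Finset.dvd_sum fun u _ => ih u
      have h2 : ((q.den:ℤ))^(k+1) ∣ q.num * (G.degree v : ℤ) := by
        rw [hZ v, pow_succ, mul_comm ((q.den:ℤ)^k) _]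
        exact mul_dvd_mul_left _ h1
      have hcop : IsCoprime ((q.den:ℤ)^(k+1)) q.num := by
        have : IsCoprime (q.num) ((q.den:ℤ)) := by
          rw [Int.isCoprime_iff_gcd_eq_one]
          exact_mod_cast q.reduced
        exact (this.symm.pow_left)
      exact hcop.dvd_of_dvd_mul_left h2
  have hden1 : q.den = 1 := by
    by_contra h
    have h2 : 2 ≤ q.den := (Nat.two_le_iff _).mpr ⟨q.den_nz, h⟩
    set k := G.degree v₀ with hk
    have hdd : ((q.den:ℤ))^k ∣ (k : ℤ) := hdvd k v₀
    have hle : ((q.den:ℤ))^k ≤ (k:ℤ) := Int.le_of_dvd (by exact_mod_cast hv₀) hdd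
    have hlt : (k:ℤ) < (2:ℤ)^k := by exact_mod_cast (Nat.lt_two_pow_self : k < 2 ^ k)
    have : (2:ℤ)^k ≤ ((q.den:ℤ))^k := by
      apply pow_le_pow_left₀ (by norm_num)
      exact_mod_cast h2
    omega
  have hq_int : (q : ℝ) = (q.num : ℝ) := by
    rw [Rat.cast_def, hden1]
    norm_num
  have hnumpos : 0 < q.num := by
    have : (0:ℝ) < (q.num:ℝ) := by rw [← hq_int, hqρ]; exact hρpos
    exact_mod_cast this
  refine ⟨⟨q.num.toNat, ?_, ?_⟩, ?_⟩
  · omega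
  · have : ((q.num.toNat : ℕ) : ℝ) = ρ := by
      rw [← hqρ, hq_int]
      norm_cast
      omega
    rw [this]
    exact hhar
  · rintro ⟨kk, hkk⟩
    have hkkpos : 0 < kk := by rw [← hkk v₀]; exact hv₀
    have h0mem : (0:ℝ) ∈ ({ρ, 0} : Set ℝ) := by simp
    rw [← hmain] at h0mem
    obtain ⟨x, hx0, hxe, hx1⟩ := h0mem
    have hAx : (G.adjMatrix ℝ) *ᵥ x = 0 := by rw [hxe, zero_smul]
    have hcontr : (kk:ℝ) * (x ⬝ᵥ (fun _ => (1:ℝ))) = 0 := by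
      have h1 : ((G.adjMatrix ℝ) *ᵥ x) ⬝ᵥ (fun _ => (1:ℝ)) = 0 := by
        rw [hAx, zero_dotProduct]
      rw [adj_dot_symm, hd_deg (G := G)] at h1
      have h2 : (fun v => (G.degree v : ℝ)) = (kk:ℝ) • (fun _ => (1:ℝ)) := by
        funext v; simp [hkk v]
      rw [h2, dotProduct_smul, smul_eq_mul] at h1
      exact h1
    rcases mul_eq_zero.mp hcontr with h | h
    · have : kk = 0 := by exact_mod_cast h
      omega
    · exact absurd h hx1


end Stmt3Aux

theorem stmt_3 {V : Type*} [Fintype V] [DecidableEq V]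
    (G : SimpleGraph V) [DecidableRel G.Adj] (hG : G.Connected)
    (ρ : ℝ) (hρpos : 0 < ρ)
    (hρeig : ∃ x : V → ℝ, x ≠ 0 ∧ (G.adjMatrix ℝ).mulVec x = ρ • x)
    (hρmax : ∀ μ : ℝ, (∃ x : V → ℝ, x ≠ 0 ∧ (G.adjMatrix ℝ).mulVec x = μ • x) → μ ≤ ρ) :
    ((∃ δ : ℕ, 0 < δ ∧
        (G.adjMatrix ℝ).mulVec ((G.adjMatrix ℝ).mulVec (fun _ => (1 : ℝ))) =
          (δ : ℝ) • (G.adjMatrix ℝ).mulVec (fun _ => (1 : ℝ))) ∧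
      ¬ ∃ k : ℕ, G.IsRegularOfDegree k) ↔
    {μ : ℝ | G.IsMainEigenvalue μ} = {ρ, 0} := by
  constructor
  · rintro ⟨⟨δ, hδpos, hhar⟩, hnreg⟩
    exact Stmt3Aux.forward hG hρpos hρeig hρmax δ hδpos hhar hnreg
  · intro hmain
    exact Stmt3Aux.reverse hG hρpos hρeig hmain
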